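/- If K and L are elementarily equivalent fields with common prime field k, and K_abs, L_abs denote the relative algebraic closures of k in K and L respectively, then K_abs and L_abs are isomorphic fields. -/

import Mathlib

open FirstOrder

namespace AbsProofAux

open Language Polynomial

theorem exists_int_denom {K : Type*} [Field K] {y : K} (hy : y ∈ (⊥ : Subfield K)) :
    ∃ m n : ℤ, (n : K) ≠ 0 ∧ (n : K) * y = (m : K) := by
  let S : Subfield K :=
    { carrier := {y : K | ∃ m n : ℤ, (n : K) ≠ 0 ∧ (n : K) * y = (m : K)}
      zero_mem' := ⟨0, 1, by simp⟩
      one_mem' := ⟨1, 1, by simp⟩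
      add_mem' := by
        rintro a b ⟨m1, n1, hn1, h1⟩ ⟨m2, n2, hn2, h2⟩
        refine ⟨m1 * n2 + m2 * n1, n1 * n2, by push_cast; exact mul_ne_zero hn1 hn2, ?_⟩
        push_cast
        calc ((n1:K) * n2) * (a + b) = (n2:K) * ((n1:K) * a) + (n1:K) * ((n2:K) * b) := by ring
        _ = (m1:K) * n2 + (m2:K) * n1 := by rw [h1, h2]; ring
      neg_mem' := by
        rintro a ⟨m, n, hn, h⟩
        exact ⟨-m, n, hn, by push_cast; rw [mul_neg, h]⟩
      mul_mem' := by
        rintro a b ⟨m1, n1, hn1, h1⟩ ⟨m2, n2, hn2, h2⟩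
        refine ⟨m1 * m2, n1 * n2, by push_cast; exact mul_ne_zero hn1 hn2, ?_⟩
        push_cast
        calc ((n1:K) * n2) * (a * b) = ((n1:K) * a) * ((n2:K) * b) := by ring
        _ = (m1:K) * m2 := by rw [h1, h2]
      inv_mem' := by
        rintro a ⟨m, n, hn, h⟩
        rcases eq_or_ne a 0 with rfl | ha
        · exact ⟨0, 1, by simp⟩
        · refine ⟨n, m, ?_, ?_⟩
          · rw [← h]; exact mul_ne_zero hn ha
          · rw [← h, mul_assoc, mul_inv_cancel₀ ha, mul_one] }
  exact (bot_le : (⊥ : Subfield K) ≤ S) hy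

theorem exists_intPoly {K : Type*} [Field K] {x : K}
    (hx : x ∈ integralClosure (⊥ : Subfield K) K) :
    ∃ P : ℤ[X], P.map (Int.castRingHom K) ≠ 0 ∧ (P.map (Int.castRingHom K)).eval x = 0 := by
  obtain ⟨q, hq_monic, hq_eval⟩ := hx
  set q' : K[X] := q.map (algebraMap (⊥ : Subfield K) K) with hq'
  have hq'_monic : q'.Monic := hq_monic.map _
  have hq'_eval : q'.eval x = 0 := by
    rw [hq', Polynomial.eval_map]
    exact hq_eval
  have hcoeff : ∀ i, q'.coeff i ∈ (⊥ : Subfield K) := by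
    intro i
    rw [hq', Polynomial.coeff_map]
    exact SetLike.coe_mem _
  choose m n hn hmn using fun i : ℕ => exists_int_denom (hcoeff i)
  set d := q'.natDegree with hd
  set s := Finset.range (d + 1) with hs
  set Pp : Polynomial ℤ := ∑ i ∈ s, Polynomial.C (m i * ∏ j ∈ s.erase i, n j) * Polynomial.X ^ i
    with hPp
  have hmap : Pp.map (Int.castRingHom K) = Polynomial.C ((∏ j ∈ s, (n j : K))) * q' := by
    rw [hPp, Polynomial.map_sum]
    have hq'sum : q' = ∑ i ∈ s, Polynomial.C (q'.coeff i) * Polynomial.X ^ i := by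
      simp_rw [Polynomial.C_mul_X_pow_eq_monomial]
      exact q'.as_sum_range' (d + 1) (by omega)
    conv_rhs => rw [hq'sum]
    rw [Finset.mul_sum]
    refine Finset.sum_congr rfl ?_
    intro i hi
    rw [Polynomial.map_mul, Polynomial.map_pow, Polynomial.map_X, Polynomial.map_C,
      ← mul_assoc, ← Polynomial.C_mul]
    congr 2
    show ((m i * ∏ j ∈ s.erase i, n j : ℤ) : K) = _
    push_cast
    rw [← hmn i, ← Finset.mul_prod_erase s (fun j => (n j : K)) hi]
    ring
  refine ⟨Pp, ?_, ?_⟩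
  · rw [hmap]
    refine mul_ne_zero ?_ hq'_monic.ne_zero
    rw [Polynomial.C_ne_zero]
    exact Finset.prod_ne_zero_iff.2 fun j _ => hn j
  · rw [hmap, Polynomial.eval_mul, hq'_eval, mul_zero]

theorem mem_of_intPoly_root {L : Type*} [Field L] {b : L} {P : ℤ[X]}
    (hP : P.map (Int.castRingHom L) ≠ 0) (hb : (P.map (Int.castRingHom L)).eval b = 0) :
    b ∈ integralClosure (⊥ : Subfield L) L := by
  have key : ∀ y : L, IsAlgebraic (⊥ : Subfield L) y → IsIntegral (⊥ : Subfield L) y :=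
    fun y hy => isAlgebraic_iff_isIntegral.1 hy
  have hcomp : (algebraMap (⊥ : Subfield L) L).comp (Int.castRingHom (⊥ : Subfield L))
      = Int.castRingHom L := Subsingleton.elim _ _
  refine key b ⟨P.map (Int.castRingHom (⊥ : Subfield L)), ?_, ?_⟩
  · intro h0
    apply hP
    rw [← hcomp, ← Polynomial.map_map, h0, Polynomial.map_zero]
  · rw [Polynomial.aeval_def, Polynomial.eval₂_eq_eval_map, Polynomial.map_map, hcomp]
    exact hb

section ModelTheoryPart

open FirstOrder.Ring

attribute [local instance] FirstOrder.Ring.compatibleRingOfRing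

/-- The formula asserting that the `i`-th variable is a root of the integer polynomial `Q`. -/
noncomputable def rootFormula {n : ℕ} (Q : ℤ[X]) (i : Fin n) : Language.ring.Formula (Fin n) :=
  Term.equal (termOfFreeCommRing
    (Polynomial.eval₂ (Int.castRingHom (FreeCommRing (Fin n))) (FreeCommRing.of i) Q)) 0

theorem realize_rootFormula {M : Type*} [Field M] {n : ℕ} (Q : ℤ[X]) (i : Fin n)
    (v : Fin n → M) :
    (rootFormula Q i).Realize v ↔ (Q.map (Int.castRingHom M)).eval (v i) = 0 := by
  rw [rootFormula, Formula.realize_equal, realize_termOfFreeCommRing, realize_zero,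
    Polynomial.hom_eval₂]
  have h1 : ((FreeCommRing.lift v).comp (Int.castRingHom (FreeCommRing (Fin n))))
      = Int.castRingHom M := Subsingleton.elim _ _
  rw [h1, FreeCommRing.lift_of, Polynomial.eval_map]

theorem map_intPoly_ne_zero_transfer {K L : Type} [Field K] [Field L]
    (h : K ≅[Language.ring] L) {P : ℤ[X]}
    (hP : P.map (Int.castRingHom K) ≠ 0) : P.map (Int.castRingHom L) ≠ 0 := by
  obtain ⟨i, hi⟩ : ∃ i, ((P.coeff i : K)) ≠ 0 := by
    by_contra hc
    push_neg at hc
    apply hP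
    ext j
    rw [Polynomial.coeff_map, Polynomial.coeff_zero]
    exact hc j
  intro h0
  apply hi
  set t : Language.ring.Term Empty :=
    termOfFreeCommRing ((P.coeff i : FreeCommRing Empty)) with ht
  have hL : L ⊨ (Term.equal t 0 : Language.ring.Sentence) := by
    rw [Sentence.Realize, Formula.realize_equal, ht, realize_termOfFreeCommRing, realize_zero,
      map_intCast]
    have : ((P.map (Int.castRingHom L)).coeff i) = ((P.coeff i : L)) := by
      rw [Polynomial.coeff_map]; rfl
    rw [← this, h0, Polynomial.coeff_zero]
  have hK : K ⊨ (Term.equal t 0 : Language.ring.Sentence) := (h.realize_sentence _).2 hL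
  rw [Sentence.Realize, Formula.realize_equal, ht, realize_termOfFreeCommRing, realize_zero,
    map_intCast] at hK
  exact hK

theorem realize_iInf' {M : Type*} [Language.ring.Structure M] {α β : Type*} [Fintype β]
    (f : β → Language.ring.Formula α) (v : α → M) :
    Formula.Realize (BoundedFormula.iInf f) v ↔ ∀ b ∈ (Finset.univ : Finset β), (f b).Realize v :=
  (BoundedFormula.realize_iInf (f := f) (v := v) (v' := default)).trans (by simp [Formula.Realize])


/-- `σ` preserves all first-order formulas from `M` to `N`. -/
def Star {M N : Type} [Field M] [Field N]
    (σ : (integralClosure (⊥ : Subfield M) M) → (integralClosure (⊥ : Subfield N) N)) : Prop :=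
  ∀ (n : ℕ) (f : Fin n → (integralClosure (⊥ : Subfield M) M))
    (φ : Language.ring.Formula (Fin n)),
    φ.Realize (fun i => ((f i : M))) → φ.Realize (fun i => ((σ (f i) : N)))

theorem exists_elem_map {K L : Type} [Field K] [Field L]
    (h : K ≅[Language.ring] L) :
    ∃ σ : (integralClosure (⊥ : Subfield K) K) → (integralClosure (⊥ : Subfield L) L),
      Star σ := by
  show ∃ σ : (integralClosure (⊥ : Subfield K) K) → (integralClosure (⊥ : Subfield L) L),
      ∀ (n : ℕ) (f : Fin n → (integralClosure (⊥ : Subfield K) K))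
        (φ : Language.ring.Formula (Fin n)),
        φ.Realize (fun i => ((f i : K))) → φ.Realize (fun i => ((σ (f i) : L)))
  classical
  choose P hP0 hPev using fun a : (integralClosure (⊥ : Subfield K) K) => exists_intPoly a.2
  letI : TopologicalSpace L := ⊥
  haveI : DiscreteTopology L := ⟨rfl⟩
  set T : (integralClosure (⊥ : Subfield K) K) → Set L :=
    fun a => {b : L | ((P a).map (Int.castRingHom L)).eval b = 0} with hT
  have hTfin : ∀ a, (T a).Finite := fun a =>
    Polynomial.finite_setOf_isRoot (map_intPoly_ne_zero_transfer h (hP0 a))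
  haveI : ∀ a, Finite (T a) := fun a => (hTfin a).to_subtype
  have key : ∀ (n : ℕ) (f : Fin n → (integralClosure (⊥ : Subfield K) K))
      (φ : Language.ring.Formula (Fin n)), φ.Realize (fun i => ((f i : K))) →
      ∃ b : Fin n → L, φ.Realize b ∧
        (∀ i, ((P (f i)).map (Int.castRingHom L)).eval (b i) = 0) ∧
        ∀ i j : Fin n, f i = f j → b i = b j := by
    intro n f φ hφ
    set ψ : Language.ring.Formula (Fin n) :=
      φ ⊓ ((BoundedFormula.iInf fun i : Fin n => rootFormula (P (f i)) i) ⊓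
        (BoundedFormula.iInf fun p : Fin n × Fin n =>
          if f p.1 = f p.2 then Term.equal (Term.var p.1) (Term.var p.2) else ⊤)) with hψ
    have hrealize : ∀ (M : Type) [Field M] (v : Fin n → M),
        ψ.Realize v ↔ (φ.Realize v ∧
          (∀ i, ((P (f i)).map (Int.castRingHom M)).eval (v i) = 0) ∧
          ∀ i j : Fin n, f i = f j → v i = v j) := by
      intro M _ v
      rw [hψ, Formula.realize_inf, Formula.realize_inf, realize_iInf', realize_iInf']
      constructor
      · rintro ⟨h1, h2, h3⟩
        refine ⟨h1, fun i => (realize_rootFormula _ _ _).1 (h2 i (Finset.mem_univ _)), ?_⟩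
        intro i j hij
        have := h3 (i, j) (Finset.mem_univ _)
        rw [if_pos hij] at this
        rw [Formula.realize_equal] at this
        exact this
      · rintro ⟨h1, h2, h3⟩
        refine ⟨h1, fun i _ => (realize_rootFormula _ _ _).2 (h2 i), ?_⟩
        intro p _
        by_cases hp : f p.1 = f p.2
        · rw [if_pos hp, Formula.realize_equal]
          exact h3 p.1 p.2 hp
        · rw [if_neg hp]
          exact Formula.realize_top.2 trivial
    have hKs : K ⊨ ((ψ.relabel (Sum.inr : Fin n → Empty ⊕ Fin n)).iExs (Fin n)) := by
      rw [Sentence.Realize, Formula.realize_iExs]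
      simp only [Formula.realize_relabel]
      exact ⟨fun i => ((f i : K)), (hrealize K _).2 ⟨hφ, fun i => hPev (f i),
        fun i j hij => show ((f i : K)) = ((f j : K)) by rw [hij]⟩⟩
    have hLs : L ⊨ ((ψ.relabel (Sum.inr : Fin n → Empty ⊕ Fin n)).iExs (Fin n)) := (h.realize_sentence _).1 hKs
    rw [Sentence.Realize, Formula.realize_iExs] at hLs
    simp only [Formula.realize_relabel] at hLs
    obtain ⟨b, hb⟩ := hLs
    obtain ⟨hb1, hb2, hb3⟩ := (hrealize L b).1 hb
    exact ⟨b, hb1, hb2, hb3⟩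
  have hTne : ∀ a, (T a).Nonempty := by
    intro a
    obtain ⟨b, -, hb, -⟩ := key 1 (fun _ => a) ⊤ (Formula.realize_top.2 trivial)
    exact ⟨b 0, hb 0⟩
  have hZne : ∀ (t : {t : Σ n : ℕ, (Fin n → (integralClosure (⊥ : Subfield K) K)) ×
        Language.ring.Formula (Fin n) // t.2.2.Realize (fun i => ((t.2.1 i : K)))}),
      Set.Nonempty {β : ∀ a, T a | t.1.2.2.Realize (fun i => ((β (t.1.2.1 i) : L)))} := by
    rintro ⟨⟨n, f, φ⟩, hφ⟩
    obtain ⟨b, hbφ, hbroot, hbeq⟩ := key n f φ hφ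
    have hmem : ∀ a, ∀ hex : ∃ i, f i = a, b hex.choose ∈ T a := by
      intro a hex
      have := hbroot hex.choose
      rw [hex.choose_spec] at this
      exact this
    refine ⟨fun a => if hex : ∃ i, f i = a then ⟨b hex.choose, hmem a hex⟩
      else ⟨(hTne a).some, (hTne a).some_mem⟩, ?_⟩
    show φ.Realize _
    have hcoe : (fun i => ((if hex : ∃ j, f j = f i then
        (⟨b hex.choose, hmem (f i) hex⟩ : T (f i)) else ⟨(hTne (f i)).some,
          (hTne (f i)).some_mem⟩ : T (f i)) : L)) = b := by
      funext i
      have hex : ∃ j, f j = f i := ⟨i, rfl⟩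
      rw [dif_pos hex]
      exact hbeq hex.choose i hex.choose_spec
    rw [hcoe]
    exact hbφ
  have hβex : ∃ β : ∀ a, T a, ∀ (n : ℕ)
      (f : Fin n → (integralClosure (⊥ : Subfield K) K))
      (φ : Language.ring.Formula (Fin n)), φ.Realize (fun i => ((f i : K))) →
      φ.Realize (fun i => ((β (f i) : L))) := by
    set I := {t : Σ n : ℕ, (Fin n → (integralClosure (⊥ : Subfield K) K)) ×
        Language.ring.Formula (Fin n) // t.2.2.Realize (fun i => ((t.2.1 i : K)))} with hI
    haveI : Nonempty I := ⟨⟨⟨0, Fin.elim0, ⊤⟩, Formula.realize_top.2 trivial⟩⟩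
    set Z : I → Set (∀ a, T a) :=
      fun t => {β | t.1.2.2.Realize (fun i => ((β (t.1.2.1 i) : L)))} with hZ
    have hZclosed : ∀ t, IsClosed (Z t) := by
      intro t
      have : Z t = (fun (β : ∀ a, T a) (i : Fin t.1.1) => ((β (t.1.2.1 i) : L))) ⁻¹'
          {v : Fin t.1.1 → L | t.1.2.2.Realize v} := rfl
      rw [this]
      exact (isClosed_discrete _).preimage
        (continuous_pi fun i => (continuous_apply _).subtype_val)
    have hZdir : Directed (· ⊇ ·) Z := by
      rintro ⟨⟨n1, f1, φ1⟩, h1⟩ ⟨⟨n2, f2, φ2⟩, h2⟩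
      set g := Fin.append f1 f2 with hg
      have hc1 : ∀ (v : (integralClosure (⊥ : Subfield K) K) → L),
          ((fun i => v (g i)) ∘ Fin.castAdd n2) = fun i => v (f1 i) := by
        intro v; funext i
        show v (g (Fin.castAdd n2 i)) = v (f1 i)
        rw [hg, Fin.append_left]
      have hc2 : ∀ (v : (integralClosure (⊥ : Subfield K) K) → L),
          ((fun i => v (g i)) ∘ Fin.natAdd n1) = fun i => v (f2 i) := by
        intro v; funext i
        show v (g (Fin.natAdd n1 i)) = v (f2 i)
        rw [hg, Fin.append_right]
      have hk1 : ((fun i => ((g i : K))) ∘ Fin.castAdd n2) = fun i => ((f1 i : K)) := by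
        funext i
        show ((g (Fin.castAdd n2 i) : K)) = ((f1 i : K))
        rw [hg, Fin.append_left]
      have hk2 : ((fun i => ((g i : K))) ∘ Fin.natAdd n1) = fun i => ((f2 i : K)) := by
        funext i
        show ((g (Fin.natAdd n1 i) : K)) = ((f2 i : K))
        rw [hg, Fin.append_right]
      refine ⟨⟨⟨n1 + n2, g,
        (φ1.relabel (Fin.castAdd n2)) ⊓ (φ2.relabel (Fin.natAdd n1))⟩, ?_⟩, ?_, ?_⟩
      · rw [Formula.realize_inf, Formula.realize_relabel, Formula.realize_relabel, hk1, hk2]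
        exact ⟨h1, h2⟩
      · intro β hβ
        have := (Formula.realize_inf.1 hβ).1
        rw [Formula.realize_relabel, hc1 (fun a => ((β a : L)))] at this
        exact this
      · intro β hβ
        have := (Formula.realize_inf.1 hβ).2
        rw [Formula.realize_relabel, hc2 (fun a => ((β a : L)))] at this
        exact this
    obtain ⟨β, hβ⟩ := IsCompact.nonempty_iInter_of_directed_nonempty_isCompact_isClosed Z
      hZdir hZne (fun t => (hZclosed t).isCompact) hZclosed
    refine ⟨β, ?_⟩
    intro n f φ hφ
    exact Set.mem_iInter.1 hβ ⟨⟨n, f, φ⟩, hφ⟩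
  obtain ⟨β, hβ⟩ := hβex
  refine ⟨fun a => ⟨(β a : L), mem_of_intPoly_root (map_intPoly_ne_zero_transfer h (hP0 a))
    (β a).2⟩, ?_⟩
  intro n f φ hφ
  exact hβ n f φ hφ

theorem Star.injective {M N : Type} [Field M] [Field N]
    {σ : (integralClosure (⊥ : Subfield M) M) → (integralClosure (⊥ : Subfield N) N)}
    (hσ : Star σ) : Function.Injective σ := by
  intro x y hxy
  by_contra hne
  have hvne : ((x : M)) ≠ ((y : M)) := fun hc => hne (Subtype.ext hc)
  have h1 : Formula.Realize
      (Formula.not (Term.equal (Term.var 0) (Term.var 1)) : Language.ring.Formula (Fin 2))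
      (fun i => ((![x, y] i : M))) := by
    rw [Formula.realize_not, Formula.realize_equal]
    simp only [Term.realize_var]
    exact hvne
  have h2 := hσ 2 ![x, y] _ h1
  rw [Formula.realize_not, Formula.realize_equal] at h2
  simp only [Term.realize_var] at h2
  exact h2 (show ((σ (![x, y] 0) : N)) = ((σ (![x, y] 1) : N)) by
    show ((σ x : N)) = ((σ y : N))
    rw [hxy])

theorem Star.map_add' {M N : Type} [Field M] [Field N]
    {σ : (integralClosure (⊥ : Subfield M) M) → (integralClosure (⊥ : Subfield N) N)}
    (hσ : Star σ) (x y : (integralClosure (⊥ : Subfield M) M)) :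
    σ (x + y) = σ x + σ y := by
  have h1 : Formula.Realize
      (Term.equal (Term.var 0 + Term.var 1) (Term.var 2) : Language.ring.Formula (Fin 3))
      (fun i => ((![x, y, x + y] i : M))) := by
    rw [Formula.realize_equal, realize_add]
    simp only [Term.realize_var]
    show ((x : M)) + ((y : M)) = ((x + y : (integralClosure (⊥ : Subfield M) M)) : M)
    push_cast
    ring
  have h2 := hσ 3 ![x, y, x + y] _ h1
  rw [Formula.realize_equal, realize_add] at h2
  simp only [Term.realize_var] at h2
  have h3 : ((σ x : N)) + ((σ y : N)) = ((σ (x + y) : N)) := h2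
  apply Subtype.ext
  push_cast
  rw [← h3]

theorem Star.map_mul' {M N : Type} [Field M] [Field N]
    {σ : (integralClosure (⊥ : Subfield M) M) → (integralClosure (⊥ : Subfield N) N)}
    (hσ : Star σ) (x y : (integralClosure (⊥ : Subfield M) M)) :
    σ (x * y) = σ x * σ y := by
  have h1 : Formula.Realize
      (Term.equal (Term.var 0 * Term.var 1) (Term.var 2) : Language.ring.Formula (Fin 3))
      (fun i => ((![x, y, x * y] i : M))) := by
    rw [Formula.realize_equal, realize_mul]
    simp only [Term.realize_var]
    show ((x : M)) * ((y : M)) = ((x * y : (integralClosure (⊥ : Subfield M) M)) : M)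
    push_cast
    ring
  have h2 := hσ 3 ![x, y, x * y] _ h1
  rw [Formula.realize_equal, realize_mul] at h2
  simp only [Term.realize_var] at h2
  have h3 : ((σ x : N)) * ((σ y : N)) = ((σ (x * y) : N)) := h2
  apply Subtype.ext
  push_cast
  rw [← h3]

theorem Star.map_one' {M N : Type} [Field M] [Field N]
    {σ : (integralClosure (⊥ : Subfield M) M) → (integralClosure (⊥ : Subfield N) N)}
    (hσ : Star σ) : σ 1 = 1 := by
  have h1 : Formula.Realize
      (Term.equal (Term.var 0) 1 : Language.ring.Formula (Fin 1))
      (fun i => ((![(1 : (integralClosure (⊥ : Subfield M) M))] i : M))) := by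
    rw [Formula.realize_equal, realize_one]
    simp only [Term.realize_var]
    show ((1 : (integralClosure (⊥ : Subfield M) M)) : M) = 1
    push_cast
    ring
  have h2 := hσ 1 ![1] _ h1
  rw [Formula.realize_equal, realize_one] at h2
  simp only [Term.realize_var] at h2
  apply Subtype.ext
  exact h2

theorem Star.map_zero' {M N : Type} [Field M] [Field N]
    {σ : (integralClosure (⊥ : Subfield M) M) → (integralClosure (⊥ : Subfield N) N)}
    (hσ : Star σ) : σ 0 = 0 := by
  have h1 : Formula.Realize
      (Term.equal (Term.var 0) 0 : Language.ring.Formula (Fin 1))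
      (fun i => ((![(0 : (integralClosure (⊥ : Subfield M) M))] i : M))) := by
    rw [Formula.realize_equal, realize_zero]
    simp only [Term.realize_var]
    show ((0 : (integralClosure (⊥ : Subfield M) M)) : M) = 0
    push_cast
    ring
  have h2 := hσ 1 ![0] _ h1
  rw [Formula.realize_equal, realize_zero] at h2
  simp only [Term.realize_var] at h2
  apply Subtype.ext
  exact h2

theorem Star.comp_surjective {K L : Type} [Field K] [Field L]
    {σ : (integralClosure (⊥ : Subfield K) K) → (integralClosure (⊥ : Subfield L) L)}
    {τ : (integralClosure (⊥ : Subfield L) L) → (integralClosure (⊥ : Subfield K) K)}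
    (hσ : Star σ) (hτ : Star τ) : Function.Surjective τ := by
  intro a
  obtain ⟨P, hP0, hPev⟩ := exists_intPoly a.2
  have he : Star (fun x => τ (σ x)) := fun n f φ hφ => hτ n (fun i => σ (f i)) φ (hσ n f φ hφ)
  set U : Set (integralClosure (⊥ : Subfield K) K) :=
    {x | (P.map (Int.castRingHom K)).eval ((x : K)) = 0} with hU
  have hUfin : U.Finite := by
    have hUeq : U = Subtype.val ⁻¹' {b : K | ((P.map (Int.castRingHom K)).IsRoot b)} := rfl
    rw [hUeq]
    exact Set.Finite.preimage (Function.Injective.injOn Subtype.val_injective)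
      (Polynomial.finite_setOf_isRoot hP0)
  haveI := hUfin.to_subtype
  have hmapsto : ∀ x : (integralClosure (⊥ : Subfield K) K), x ∈ U → τ (σ x) ∈ U := by
    intro x hx
    have h1 : Formula.Realize (rootFormula P 0 : Language.ring.Formula (Fin 1))
        (fun i => ((![x] i : K))) := by
      rw [realize_rootFormula]
      exact hx
    have h2 := he 1 ![x] _ h1
    rw [realize_rootFormula] at h2
    exact h2
  set e' : U → U := fun x => ⟨τ (σ x), hmapsto x x.2⟩ with he'
  have hinj : Function.Injective e' := by
    intro x y hxy
    have h1 : τ (σ (x : (integralClosure (⊥ : Subfield K) K))) =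
        τ (σ (y : (integralClosure (⊥ : Subfield K) K))) := congrArg Subtype.val hxy
    exact Subtype.ext (he.injective h1)
  obtain ⟨x, hx⟩ := (Finite.injective_iff_surjective.1 hinj) ⟨a, hPev⟩
  exact ⟨σ x, congrArg Subtype.val hx⟩

end ModelTheoryPart

end AbsProofAux

/-- If `K` and `L` are elementarily equivalent fields, and `K_abs`, `L_abs`
denote the relative algebraic closures of the prime fields in `K` and `L`
respectively, then `K_abs` and `L_abs` are isomorphic fields. -/
theorem absolute_subfields_isomorphic_of_elementarilyEquivalent
    {K L : Type} [Field K] [Field L]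
    (h : letI := Ring.compatibleRingOfRing K
         letI := Ring.compatibleRingOfRing L
         K ≅[Language.ring] L) :
    Nonempty
      ((integralClosure (⊥ : Subfield K) K) ≃+* (integralClosure (⊥ : Subfield L) L)) := by
  letI := Ring.compatibleRingOfRing K
  letI := Ring.compatibleRingOfRing L
  obtain ⟨σ, hσ⟩ := AbsProofAux.exists_elem_map h
  obtain ⟨τ, hτ⟩ := AbsProofAux.exists_elem_map h.symm
  have hbij : Function.Bijective τ :=
    ⟨hτ.injective, AbsProofAux.Star.comp_surjective hσ hτ⟩
  let F : (integralClosure (⊥ : Subfield L) L) →+* (integralClosure (⊥ : Subfield K) K) :=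
    { toFun := τ
      map_one' := hτ.map_one'
      map_mul' := hτ.map_mul'
      map_zero' := hτ.map_zero'
      map_add' := hτ.map_add' }
  exact ⟨(RingEquiv.ofBijective F hbij).symm⟩
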